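/- Let a > 1 be real and n a positive multiple of 4. Define λ : {ζ ∈ ℂ : ζ^n = 1} → ℝ by λ(ζ) = ∑_{g=0}^{n−1} a^{−δ(g)} ζ^g where δ(g) = min(g, n−g). Then λ(ζ) > 0 for all ζ, and λ has a unique minimum at ζ = −1. Explicitly, λ(ζ) = (1 ∓ a^{−n/2})·(1 − a^{−2})/|1 − a^{−1}ζ|², where the sign is − if ζ^{n/2} = 1 and + if ζ^{n/2} = −1. -/

import Mathlib

open Finset

lemma abs_eq_one_of_pow_eq_one' (z : ℂ) (n : ℕ) (hn : n ≠ 0) (h : z ^ n = 1) :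
    ‖z‖ = 1 := by
  have h1 : ‖z‖ ^ n = 1 := by rw [← norm_pow, h, norm_one]
  have h2 : (0:ℝ) ≤ ‖z‖ := norm_nonneg _
  rcases lt_trichotomy ‖z‖ 1 with h3 | h3 | h3
  · have := pow_lt_one₀ h2 h3 hn; linarith
  · exact h3
  · have := one_lt_pow₀ h3 hn; linarith

lemma key_sum (b ζ : ℂ) (m : ℕ) (hm : 1 ≤ m) (hζ : ζ ^ (2*m) = 1)
    (hζ0 : ζ ≠ 0) :
    (∑ g ∈ Finset.range (2*m), b ^ (min g (2*m - g)) * ζ ^ g) *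
      ((1 - b*ζ) * (1 - b*ζ⁻¹)) = (1 - b^2) * (1 - b^m * ζ^m) := by
  have hq : ζ * ζ⁻¹ = 1 := mul_inv_cancel₀ hζ0
  -- split the sum
  have hsplit : (∑ g ∈ Finset.range (2*m), b ^ (min g (2*m - g)) * ζ ^ g)
      = (∑ g ∈ Finset.range (m+1), (b*ζ) ^ g)
        + ((∑ h ∈ Finset.range m, (b*ζ⁻¹) ^ h) - 1) := by
    have h1 : Finset.range (2*m) = Finset.Ico 0 (2*m) := by rw [Finset.range_eq_Ico]
    rw [h1, ← Finset.sum_Ico_consecutive _ (Nat.zero_le (m+1)) (by omega)]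
    have h2 : ∑ g ∈ Finset.Ico 0 (m+1), b ^ (min g (2*m - g)) * ζ ^ g
        = ∑ g ∈ Finset.range (m+1), (b*ζ) ^ g := by
      rw [← Finset.range_eq_Ico]
      refine Finset.sum_congr rfl fun g hg => ?_
      simp only [Finset.mem_range] at hg
      rw [min_eq_left (by omega), mul_pow]
    have h3 : ∑ g ∈ Finset.Ico (m+1) (2*m), b ^ (min g (2*m - g)) * ζ ^ g
        = ∑ h ∈ Finset.Ico 1 m, (b*ζ⁻¹) ^ h := by
      refine Finset.sum_nbij' (fun g => 2*m - g) (fun h => 2*m - h) ?_ ?_ ?_ ?_ ?_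
      · intro g hg; simp only [Finset.mem_Ico] at *; omega
      · intro h hh; simp only [Finset.mem_Ico] at *; omega
      · intro g hg; simp only [Finset.mem_Ico] at hg; show 2*m - (2*m - g) = g; omega
      · intro h hh; simp only [Finset.mem_Ico] at hh; show 2*m - (2*m - h) = h; omega
      · intro g hg
        simp only [Finset.mem_Ico] at hg
        have hmin : min g (2*m - g) = 2*m - g := by omega
        rw [hmin, mul_pow]
        congr 1
        have e0 : ζ ^ (2*m - g) * (ζ⁻¹) ^ (2*m - g) = 1 := by
          rw [← mul_pow, hq, one_pow]
        have e1 : ζ ^ g * ζ ^ (2*m - g) = 1 := by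
          rw [← pow_add]
          have : g + (2*m - g) = 2*m := by omega
          rw [this, hζ]
        calc ζ ^ g = ζ ^ g * (ζ ^ (2*m - g) * (ζ⁻¹) ^ (2*m - g)) := by rw [e0, mul_one]
        _ = (ζ ^ g * ζ ^ (2*m - g)) * (ζ⁻¹) ^ (2*m - g) := by ring
        _ = (ζ⁻¹) ^ (2*m - g) := by rw [e1, one_mul]
    rw [h2, h3]
    have h4 : ∑ h ∈ Finset.range m, (b*ζ⁻¹) ^ h
        = (b*ζ⁻¹)^0 + ∑ h ∈ Finset.Ico 1 m, (b*ζ⁻¹) ^ h := by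
      rw [Finset.range_eq_Ico, Finset.sum_eq_sum_Ico_succ_bot (by omega)]
    rw [h4]
    ring
  rw [hsplit]
  have hA : (∑ g ∈ Finset.range (m+1), (b*ζ) ^ g) * ((b*ζ) - 1)
      = (b*ζ)^(m+1) - 1 := geom_sum_mul _ _
  have hB : (∑ h ∈ Finset.range m, (b*ζ⁻¹) ^ h) * ((b*ζ⁻¹) - 1)
      = (b*ζ⁻¹)^m - 1 := geom_sum_mul _ _
  have hu : ζ^m * ζ^m = 1 := by
    rw [← pow_add]
    have : m + m = 2*m := by omega
    rw [this, hζ]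
  have huq : ζ^m * (ζ⁻¹)^m = 1 := by rw [← mul_pow, hq, one_pow]
  have hq' : (ζ⁻¹)^m = ζ^m := by
    calc (ζ⁻¹)^m = (ζ^m * ζ^m) * (ζ⁻¹)^m := by rw [hu, one_mul]
    _ = ζ^m * (ζ^m * (ζ⁻¹)^m) := by ring
    _ = ζ^m := by rw [huq, mul_one]
  rw [mul_pow, pow_succ] at hA
  rw [mul_pow, hq'] at hB
  linear_combination (-(1 - b*ζ⁻¹)) * hA + (-(1 - b*ζ)) * hB + (b^(m+2)*ζ^m - b^2) * hq

theorem one_dim_factor_min (a : ℝ) (ha : 1 < a) (n : ℕ) (hn : 0 < n) (h4 : 4 ∣ n) :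
    let lam : ℂ → ℂ := fun ζ => ∑ g ∈ Finset.range n,
      ((a ^ (-((min g (n - g) : ℕ) : ℤ)) : ℝ) : ℂ) * ζ ^ g
    (∀ ζ : ℂ, ζ ^ n = 1 →
        lam ζ = ((if ζ ^ (n / 2) = 1 then ((1 - a ^ (-((n / 2 : ℕ) : ℤ)) : ℝ) : ℂ)
            else ((1 + a ^ (-((n / 2 : ℕ) : ℤ)) : ℝ) : ℂ)) *
          (((1 - a ^ (-2 : ℤ)) : ℝ) : ℂ)) / (‖1 - (a : ℂ)⁻¹ * ζ‖ ^ 2 : ℝ)) ∧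
    (∀ ζ : ℂ, ζ ^ n = 1 → 0 < (lam ζ).re) ∧
    (∀ ζ : ℂ, ζ ^ n = 1 → ζ ≠ -1 → (lam (-1)).re < (lam ζ).re) := by
  intro lam
  set m : ℕ := n / 2 with hm_def
  obtain ⟨k, hk⟩ := h4
  have hn2 : n = 2 * m := by omega
  have hm1 : 1 ≤ m := by omega
  have hmeven : Even m := by refine ⟨k, ?_⟩; omega
  have ha0 : (0:ℝ) < a := lt_trans one_pos ha
  set b : ℝ := a⁻¹ with hb_def
  have hb0 : 0 < b := inv_pos.mpr ha0
  have hb1 : b < 1 := inv_lt_one_of_one_lt₀ ha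
  have hbm1 : b ^ m < 1 := pow_lt_one₀ hb0.le hb1 (by omega)
  have hbm0 : 0 < b ^ m := pow_pos hb0 m
  have hb2 : b ^ 2 < 1 := pow_lt_one₀ hb0.le hb1 (by omega)
  have hco : ∀ g : ℕ, ((a ^ (-((min g (n - g) : ℕ) : ℤ)) : ℝ) : ℂ)
      = ((b:ℝ):ℂ) ^ (min g (n - g)) := by
    intro g
    rw [zpow_neg, zpow_natCast, hb_def]
    push_cast
    rw [inv_pow]
  -- master formula
  have hmain : ∀ ζ : ℂ, ζ ^ n = 1 →
      lam ζ = (((if ζ ^ m = 1 then 1 - b ^ m else 1 + b ^ m) * (1 - b ^ 2)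
        / Complex.normSq (1 - (b:ℂ) * ζ) : ℝ) : ℂ) := by
    intro ζ hζ
    have hζ0 : ζ ≠ 0 := by
      intro h
      rw [h, zero_pow (by omega)] at hζ
      exact one_ne_zero hζ.symm
    have habs : ‖ζ‖ = 1 := abs_eq_one_of_pow_eq_one' ζ n (by omega) hζ
    have hne : (1 : ℂ) - (b:ℂ) * ζ ≠ 0 := by
      intro h
      have h1 : (b:ℂ) * ζ = 1 := by linear_combination -h
      have h2 : ‖(b:ℂ) * ζ‖ = 1 := by rw [h1, norm_one]
      rw [norm_mul, habs, mul_one, Complex.norm_of_nonneg hb0.le] at h2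
      linarith
    have hlam : lam ζ = ∑ g ∈ Finset.range n, ((b:ℝ):ℂ) ^ (min g (n - g)) * ζ ^ g :=
      Finset.sum_congr rfl fun g _ => by rw [hco g]
    have hkey := key_sum ((b:ℝ):ℂ) ζ m hm1 (by rw [← hn2]; exact hζ) hζ0
    rw [← hn2] at hkey
    have hconj : (starRingEnd ℂ) (1 - (b:ℂ) * ζ) = 1 - (b:ℂ) * ζ⁻¹ := by
      rw [map_sub, map_one, map_mul, Complex.conj_ofReal, Complex.inv_eq_conj habs]
    have hDval : (1 - (b:ℂ)*ζ) * (1 - (b:ℂ)*ζ⁻¹)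
        = ((Complex.normSq (1 - (b:ℂ) * ζ) : ℝ) : ℂ) := by
      rw [← hconj, Complex.mul_conj]
    have hD0 : Complex.normSq (1 - (b:ℂ) * ζ) ≠ 0 := by
      simpa [Complex.normSq_eq_zero] using hne
    have hu : ζ ^ m = 1 ∨ ζ ^ m = -1 := by
      have h5 : ζ ^ m * ζ ^ m = 1 := by
        rw [← pow_add]
        have : m + m = n := by omega
        rw [this, hζ]
      exact mul_self_eq_one_iff.mp h5
    have hfac : (1 - ((b:ℝ):ℂ)^2) * (1 - ((b:ℝ):ℂ)^m * ζ^m)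
        = (((if ζ ^ m = 1 then 1 - b ^ m else 1 + b ^ m) * (1 - b ^ 2) : ℝ) : ℂ) := by
      rcases hu with h | h
      · rw [h, if_pos rfl]; push_cast; ring
      · rw [h, if_neg (by norm_num)]; push_cast; ring
    rw [hlam, Complex.ofReal_div, eq_div_iff (by exact_mod_cast hD0), ← hDval, ← hfac]
    exact hkey
  -- real part formula
  have hre : ∀ ζ : ℂ, ζ ^ n = 1 →
      (lam ζ).re = (if ζ ^ m = 1 then 1 - b ^ m else 1 + b ^ m) * (1 - b ^ 2)
        / Complex.normSq (1 - (b:ℂ) * ζ) := by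
    intro ζ hζ
    rw [hmain ζ hζ, Complex.ofReal_re]
  have hdpos : ∀ ζ : ℂ, ζ ^ n = 1 → 0 < Complex.normSq (1 - (b:ℂ) * ζ) := by
    intro ζ hζ
    rw [Complex.normSq_pos]
    intro h
    have h1 : (b:ℂ) * ζ = 1 := by linear_combination -h
    have habs : ‖ζ‖ = 1 := abs_eq_one_of_pow_eq_one' ζ n (by omega) hζ
    have h2 : ‖(b:ℂ) * ζ‖ = 1 := by rw [h1, norm_one]
    rw [norm_mul, habs, mul_one, Complex.norm_of_nonneg hb0.le] at h2
    linarith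
  refine ⟨?_, ?_, ?_⟩
  · -- formula
    intro ζ hζ
    rw [hmain ζ hζ]
    rw [Complex.sq_norm]
    have e2 : (1 - a ^ (-2 : ℤ) : ℝ) = (1 - b^2 : ℝ) := by
      rw [show (-2:ℤ) = -((2:ℕ):ℤ) by norm_num, zpow_neg, zpow_natCast, hb_def, inv_pow]
    have em : (a ^ (-((m:ℕ) : ℤ)) : ℝ) = b ^ m := by
      rw [zpow_neg, zpow_natCast, hb_def, inv_pow]
    have hbc : (a : ℂ)⁻¹ = ((b:ℝ):ℂ) := by rw [hb_def]; push_cast; ring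
    rw [hbc, e2, em]
    push_cast
    split_ifs <;> push_cast <;> ring
  · -- positivity
    intro ζ hζ
    rw [hre ζ hζ]
    have hd := hdpos ζ hζ
    apply div_pos _ hd
    apply mul_pos _ (by nlinarith)
    split_ifs <;> nlinarith
  · -- minimum
    intro ζ hζ hζne
    have hneg1n : ((-1 : ℂ)) ^ n = 1 := by
      have : Even n := ⟨2*k, by omega⟩
      exact this.neg_one_pow
    have hneg1m : ((-1 : ℂ)) ^ m = 1 := hmeven.neg_one_pow
    rw [hre ζ hζ, hre (-1) hneg1n]
    have hd1 : Complex.normSq (1 - (b:ℂ) * (-1)) = (1+b)^2 := by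
      have h6 : (1 : ℂ) - (b:ℂ) * (-1) = ((1 + b : ℝ) : ℂ) := by push_cast; ring
      rw [h6, Complex.normSq_ofReal]; ring
    rw [if_pos hneg1m, hd1]
    -- facts about ζ
    have habs : ‖ζ‖ = 1 := abs_eq_one_of_pow_eq_one' ζ n (by omega) hζ
    have hns : ζ.re^2 + ζ.im^2 = 1 := by
      have h7 := Complex.normSq_eq_norm_sq ζ
      rw [habs] at h7
      simp only [Complex.normSq_apply, one_pow] at h7
      nlinarith [h7]
    have hre_gt : -1 < ζ.re := by
      rcases lt_or_ge (-1) ζ.re with h | h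
      · exact h
      · exfalso
        have h1 : ζ.re = -1 := by nlinarith
        have h2 : ζ.im = 0 := by nlinarith
        exact hζne (Complex.ext (by simp [h1]) (by simp [h2]))
    have hdlt : Complex.normSq (1 - (b:ℂ) * ζ) < (1+b)^2 := by
      simp only [Complex.normSq_apply, Complex.sub_re, Complex.sub_im, Complex.one_re,
        Complex.one_im, Complex.mul_re, Complex.mul_im, Complex.ofReal_re, Complex.ofReal_im]
      nlinarith
    have hd := hdpos ζ hζ
    have hnum0 : 0 < (1 - b ^ m) * (1 - b ^ 2) := by nlinarith
    have step1 : (1 - b ^ m) * (1 - b ^ 2) / (1+b)^2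
        < (1 - b ^ m) * (1 - b ^ 2) / Complex.normSq (1 - (b:ℂ) * ζ) :=
      div_lt_div_of_pos_left hnum0 hd hdlt
    rcases eq_or_ne (ζ ^ m) 1 with h | h
    · rw [if_pos h]
      exact step1
    · rw [if_neg h]
      refine step1.trans_le ?_
      have hcle : (1 - b ^ m) * (1 - b ^ 2) ≤ (1 + b ^ m) * (1 - b ^ 2) :=
        mul_le_mul_of_nonneg_right (by linarith) (by linarith)
      exact div_le_div_of_nonneg_right hcle hd.le
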